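/- Let A be a finite set, F a field, k ≥ 2, and T : A^k → F a function with T(a₁, …, a_k) ≠ 0 if and only if a₁ = a₂ = ⋯ = a_k. Then the slice rank of T equals |A|. -/

import Mathlib

/-- A slice: a function on `A^k` that factors as (function of one coordinate) times
(function of the remaining coordinates). -/
def IsSlice {A F : Type*} [Field F] {k : ℕ} (T : (Fin k → A) → F) : Prop :=
  ∃ (i : Fin k) (f : A → F) (g : ({j : Fin k // j ≠ i} → A) → F),
    ∀ v, T v = f (v i) * g (fun j => v j.1)

/-- The slice rank of a `k`-tensor on `A`. -/
noncomputable def sliceRank {A F : Type*} [Field F] {k : ℕ} (T : (Fin k → A) → F) : ℕ :=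
  sInf {r | ∃ c : Fin r → ((Fin k → A) → F),
    (∀ j, IsSlice (c j)) ∧ ∀ v, T v = ∑ j, c j v}

open Finset Module Submodule

section Aux

variable {A F : Type*} [Fintype A] [Field F]

/-- The support of a function as a finset. -/
noncomputable def suppF (h : A → F) : Finset A :=
  (Function.support h).toFinite.toFinset

lemma mem_suppF {h : A → F} {a : A} : a ∈ suppF h ↔ h a ≠ 0 := by
  simp [suppF, Function.mem_support]

lemma snoc_apply_ne_last {m : ℕ} {α : Type*} (v : Fin m → α) (x : α) (p : Fin (m+1))
    (hp : p ≠ Fin.last m) : Fin.snoc (α := fun _ => α) v x p = v (p.castPred hp) := by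
  obtain ⟨q, rfl⟩ := Fin.exists_castSucc_eq.mpr hp
  simp [Fin.snoc_castSucc, Fin.castPred_castSucc]

/-- A finite-dimensional subspace of functions contains an element whose support has
size at least the dimension. -/
lemma exists_big_support (W : Submodule F (A → F)) :
    ∃ h ∈ W, Module.finrank F W ≤ (suppF h).card := by
  classical
  set s : Set ℕ := {n | ∃ h ∈ W, (suppF h).card = n} with hs
  have hne : s.Nonempty := ⟨(suppF (0 : A → F)).card, 0, W.zero_mem, rfl⟩
  have hbdd : BddAbove s := by
    refine ⟨Fintype.card A, ?_⟩
    rintro n ⟨h, -, rfl⟩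
    exact le_trans (Finset.card_le_univ _) (le_of_eq Finset.card_univ)
  obtain ⟨h₀, h₀W, h₀card⟩ := Nat.sSup_mem hne hbdd
  refine ⟨h₀, h₀W, ?_⟩
  by_contra hlt
  push_neg at hlt
  set L : W →ₗ[F] (↥(suppF h₀) → F) :=
    { toFun := fun w => fun a => (w : A → F) a.1
      map_add' := fun _ _ => rfl
      map_smul' := fun _ _ => rfl } with hL
  have hker : LinearMap.ker L ≠ ⊥ := by
    intro hbot
    have hinj : Function.Injective L := LinearMap.ker_eq_bot.mp hbot
    have hle := LinearMap.finrank_le_finrank_of_injective hinj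
    rw [Module.finrank_fintype_fun_eq_card, Fintype.card_coe] at hle
    omega
  obtain ⟨w, hwker, hw0⟩ := Submodule.exists_mem_ne_zero_of_ne_bot hker
  have hw' : ∀ a ∈ suppF h₀, (w : A → F) a = 0 := by
    intro a ha
    exact congrFun (LinearMap.mem_ker.mp hwker) ⟨a, ha⟩
  have hwne : (w : A → F) ≠ 0 := fun hh => hw0 (Subtype.ext hh)
  obtain ⟨b, hb⟩ := Function.ne_iff.mp hwne
  have hbns : b ∉ suppF h₀ := fun hbs => hb (hw' b hbs)
  set h₂ : A → F := h₀ + (w : A → F) with hh₂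
  have h₂W : h₂ ∈ W := W.add_mem h₀W w.2
  have hsub : suppF h₀ ⊆ suppF h₂ := by
    intro a ha
    rw [mem_suppF] at ha ⊢
    rw [hh₂, Pi.add_apply, hw' a (mem_suppF.mpr ha), add_zero]
    exact ha
  have hbmem : b ∈ suppF h₂ := by
    rw [mem_suppF, hh₂, Pi.add_apply]
    have : h₀ b = 0 := by
      by_contra hc
      exact hbns (mem_suppF.mpr hc)
    rw [this, zero_add]
    exact hb
  have hcard : (suppF h₀).card < (suppF h₂).card :=
    Finset.card_lt_card (Finset.ssubset_iff_of_subset hsub |>.mpr ⟨b, hbmem, hbns⟩)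
  have : (suppF h₂).card ≤ sSup s := le_csSup hbdd ⟨h₂, h₂W, rfl⟩
  omega

end Aux

section Lower

variable {A F : Type*} [Fintype A] [Field F]

lemma lowerAux (n : ℕ) : ∀ (T : (Fin (n+2) → A) → F) (D : Finset A),
    (∀ v : Fin (n+2) → A, (∃ i j, v i ≠ v j) → T v = 0) →
    (∀ a : A, T (fun _ => a) ≠ 0 ↔ a ∈ D) →
    ∀ (ι : Type) (_ : Fintype ι) (c : ι → (Fin (n+2) → A) → F),
      (∀ j, IsSlice (c j)) → (∀ v, T v = ∑ j, c j v) → D.card ≤ Fintype.card ι := by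
  induction n with
  | zero =>
    intro T D hdiag hD ι _ c hs hsum
    classical
    choose i f g hfg using hs
    have h01 : ∀ p : Fin 2, p ≠ 0 → p = 1 := by decide
    have h10 : ∀ p : Fin 2, p ≠ 1 → p = 0 := by decide
    set φ : ι → (A → F) := fun j => if i j = 0 then (fun b => g j (fun _ => b)) else f j with hφ
    set ψ : ι → A → F := fun j a => if i j = 0 then f j a else g j (fun _ => a) with hψ
    have key : ∀ a b : A, T (fun p => if p = 0 then a else b) = ∑ j, ψ j a * φ j b := by
      intro a b
      rw [hsum]
      refine Finset.sum_congr rfl fun j _ => ?_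
      rw [hfg]
      by_cases hij : i j = 0
      · have h1 : ∀ (x y : A), (if i j = 0 then x else y) = x := fun x y => if_pos hij
        have h1F : ∀ (x y : F), (if i j = 0 then x else y) = x := fun x y => if_pos hij
        have h1AF : ∀ (x y : A → F), (if i j = 0 then x else y) = x := fun x y => if_pos hij
        have h2 : (fun q : {p // p ≠ i j} => if q.1 = 0 then a else b)
            = (fun _ => b) := by
          funext q; exact if_neg (hij ▸ q.2)
        simp only [hψ, hφ, h1, h1F, h1AF, h2]
      · have hij1 : i j = 1 := h01 _ hij
        have hne0 : i j ≠ 0 := by rw [hij1]; decide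
        have h1 : ∀ (x y : A), (if i j = 0 then x else y) = y := fun x y => if_neg hne0
        have h1F : ∀ (x y : F), (if i j = 0 then x else y) = y := fun x y => if_neg hne0
        have h1AF : ∀ (x y : A → F), (if i j = 0 then x else y) = y := fun x y => if_neg hne0
        have h2 : (fun q : {p // p ≠ i j} => if q.1 = 0 then a else b)
            = (fun _ => a) := by
          funext q; exact if_pos (h10 q.1 (fun hh => q.2 (hh.trans hij1.symm)))
        simp only [hψ, hφ, h1, h1F, h1AF, h2]
        exact mul_comm _ _
    have hmem : ∀ a : A,
        (fun b => T (fun p => if p = 0 then a else b)) ∈ span F (Set.range φ) := by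
      intro a
      have heq : (fun b => T (fun p => if p = 0 then a else b)) = ∑ j, ψ j a • φ j := by
        funext b
        rw [key]
        simp [Finset.sum_apply]
      rw [heq]
      exact Submodule.sum_mem _ fun j _ => Submodule.smul_mem _ _ (Submodule.subset_span ⟨j, rfl⟩)
    set ρ : ↥D → (A → F) := fun a => fun b => T (fun p => if p = 0 then a.1 else b) with hρ
    have hconst : ∀ a : A, (fun p : Fin 2 => if p = 0 then a else a) = fun _ => a := by
      intro a; funext p; split <;> rfl
    have hindep : LinearIndependent F ρ := by
      rw [Fintype.linearIndependent_iff]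
      intro coeffs hcoeffs a₀
      have heval := congrFun hcoeffs a₀.1
      simp only [Finset.sum_apply, Pi.smul_apply, smul_eq_mul, Pi.zero_apply] at heval
      rw [Finset.sum_eq_single a₀] at heval
      · have hne : T (fun _ => a₀.1) ≠ 0 := (hD _).mpr a₀.2
        rw [hρ] at heval
        simp only at heval
        rw [hconst a₀.1] at heval
        rcases mul_eq_zero.mp heval with h | h
        · exact h
        · exact absurd h hne
      · intro a _ hnea
        have hz : ρ a a₀.1 = 0 := by
          refine hdiag _ ⟨0, 1, ?_⟩
          rw [if_pos rfl, if_neg (by decide : ¬ (1 : Fin 2) = 0)]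
          exact fun hh => hnea (Subtype.ext hh)
        rw [hz, mul_zero]
      · intro hc
        exact absurd (Finset.mem_univ a₀) hc
    have h1 : finrank F (span F (Set.range ρ)) = Fintype.card ↥D := finrank_span_eq_card hindep
    have h2 : span F (Set.range ρ) ≤ span F (Set.range φ) := by
      rw [span_le]
      rintro _ ⟨a, rfl⟩
      exact hmem a.1
    have h3 : finrank F (span F (Set.range φ)) ≤ Fintype.card ι := finrank_range_le_card φ
    have h4 : finrank F (span F (Set.range ρ)) ≤ finrank F (span F (Set.range φ)) :=
      Submodule.finrank_mono h2
    rw [← Fintype.card_coe]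
    omega
  | succ n ih =>
    intro T D hdiag hD ι _ c hs hsum
    classical
    choose i f g hfg using hs
    set S : Finset ι := Finset.univ.filter (fun j => i j = Fin.last (n+2)) with hSdef
    set UD : Submodule F (A → F) :=
      { carrier := {h | ∀ a ∉ D, h a = 0}
        add_mem' := fun {h1 h2} ha hb a haD => by
          rw [Pi.add_apply, ha a haD, hb a haD, add_zero]
        zero_mem' := fun a _ => rfl
        smul_mem' := fun r x hx a haD => by rw [Pi.smul_apply, hx a haD, smul_zero] }
      with hUDdef
    have hUDrank : Module.finrank F ↥UD = D.card := by
      let e : ↥UD ≃ₗ[F] (↥D → F) :=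
        { toFun := fun h a => (h : A → F) a.1
          map_add' := fun _ _ => rfl
          map_smul' := fun _ _ => rfl
          invFun := fun w => ⟨fun a => if ha : a ∈ D then w ⟨a, ha⟩ else 0,
            fun a haD => dif_neg haD⟩
          left_inv := fun h => Subtype.ext (funext fun a => by
            show (if ha : a ∈ D then (h : A → F) a else 0) = (h : A → F) a
            by_cases ha : a ∈ D
            · exact dif_pos ha
            · rw [dif_neg ha, h.2 a ha])
          right_inv := fun w => funext fun a => by
            show (if ha : (a : A) ∈ D then w ⟨a, ha⟩ else 0) = w a
            rw [dif_pos a.2] }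
      rw [e.finrank_eq, Module.finrank_fintype_fun_eq_card, Fintype.card_coe]
    set L : ↥UD →ₗ[F] (↥S → F) :=
      { toFun := fun h => fun j => ∑ a, f j.1 a * (h : A → F) a
        map_add' := fun h1 h2 => funext fun j => by
          simp only [Submodule.coe_add, Pi.add_apply, mul_add, Finset.sum_add_distrib]
        map_smul' := fun r h1 => funext fun j => by
          simp only [Submodule.coe_smul, Pi.smul_apply, smul_eq_mul, RingHom.id_apply,
            Finset.mul_sum, mul_left_comm] }
      with hLdef
    have hrn := LinearMap.finrank_range_add_finrank_ker L
    have hrange : Module.finrank F ↥(LinearMap.range L) ≤ S.card := by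
      have hle := Submodule.finrank_le (LinearMap.range L)
      rwa [Module.finrank_fintype_fun_eq_card, Fintype.card_coe] at hle
    set W : Submodule F (A → F) := (LinearMap.ker L).map UD.subtype with hWdef
    have hWrank : Module.finrank F ↥(LinearMap.ker L) = Module.finrank F ↥W :=
      LinearEquiv.finrank_eq
        (Submodule.equivMapOfInjective UD.subtype (Submodule.injective_subtype UD)
          (LinearMap.ker L))
    obtain ⟨h, hhW, hhrank⟩ := exists_big_support W
    obtain ⟨h', hker', hh'⟩ := Submodule.mem_map.mp hhW
    have hD0 : ∀ a ∉ D, h a = 0 := by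
      intro a ha
      rw [← hh']
      exact h'.2 a ha
    have hker0 : ∀ j (hj : j ∈ S), ∑ a, f j a * h a = 0 := by
      intro j hj
      have heq := congrFun (LinearMap.mem_ker.mp hker') ⟨j, hj⟩
      rw [← hh']
      simpa [hLdef] using heq
    set D' : Finset A := suppF h with hD'def
    have hD'sub : D' ⊆ D := by
      intro a ha
      by_contra hc
      exact (mem_suppF.mp ha) (hD0 a hc)
    set T' : (Fin (n+2) → A) → F := fun v => ∑ x, T (Fin.snoc v x) * h x with hT'def
    have hdiag' : ∀ v : Fin (n+2) → A, (∃ p q, v p ≠ v q) → T' v = 0 := by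
      rintro v ⟨p, q, hpq⟩
      refine Finset.sum_eq_zero fun x _ => ?_
      rw [hdiag _ ⟨p.castSucc, q.castSucc, by
        rwa [Fin.snoc_castSucc, Fin.snoc_castSucc]⟩, zero_mul]
    have hsnocconst : ∀ a : A,
        (Fin.snoc (α := fun _ => A) (fun _ : Fin (n+2) => a) a) = fun _ : Fin (n+3) => a := by
      intro a
      funext p
      refine Fin.lastCases ?_ ?_ p
      · rw [Fin.snoc_last]
      · intro q; rw [Fin.snoc_castSucc]
    have hD'iff : ∀ a : A, T' (fun _ => a) ≠ 0 ↔ a ∈ D' := by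
      intro a
      have hcollapse : T' (fun _ => a) = T (fun _ => a) * h a := by
        rw [hT'def]
        simp only
        rw [Finset.sum_eq_single a]
        · rw [hsnocconst a]
        · intro x _ hxa
          have hz : T (Fin.snoc (fun _ : Fin (n+2) => a) x) = 0 := by
            refine hdiag _ ⟨(0 : Fin (n+2)).castSucc, Fin.last (n+2), ?_⟩
            rw [Fin.snoc_castSucc, Fin.snoc_last]
            exact fun hh => hxa hh.symm
          rw [hz, zero_mul]
        · intro ha; exact absurd (Finset.mem_univ a) ha
      constructor
      · intro hne
        rw [hcollapse] at hne
        exact mem_suppF.mpr (right_ne_zero_of_mul hne)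
      · intro haD'
        rw [hcollapse]
        exact mul_ne_zero ((hD a).mpr (hD'sub haD')) (mem_suppF.mp haD')
    set c' : {j : ι // j ∉ S} → (Fin (n+2) → A) → F :=
      fun j v => ∑ x, c j.1 (Fin.snoc v x) * h x with hc'def
    have hslice' : ∀ j : {j : ι // j ∉ S}, IsSlice (c' j) := by
      rintro ⟨j, hj⟩
      have hne : i j ≠ Fin.last (n+2) := by
        intro hc
        exact hj (Finset.mem_filter.mpr ⟨Finset.mem_univ j, hc⟩)
      have hcs : ((i j).castPred hne).castSucc = i j := Fin.castSucc_castPred _ hne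
      have hlt : ∀ (q : {p : Fin (n+3) // p ≠ i j}) (hq : q.1 ≠ Fin.last (n+2)),
          (q.1).castPred hq ≠ (i j).castPred hne := by
        intro q hq hcon
        apply q.2
        have hcc := congrArg Fin.castSucc hcon
        rwa [Fin.castSucc_castPred, hcs] at hcc
      refine ⟨(i j).castPred hne, f j, fun w => ∑ x, g j (fun q =>
        if hq : q.1 = Fin.last (n+2) then x
        else w ⟨(q.1).castPred hq, hlt q hq⟩) * h x, ?_⟩
      intro v
      have harg : ∀ x : A,
          (fun q : {p : Fin (n+3) // p ≠ i j} => (Fin.snoc v x : Fin (n+3) → A) q.1)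
          = fun q => if hq : q.1 = Fin.last (n+2) then x else v ((q.1).castPred hq) := by
        intro x
        funext q
        by_cases hq : q.1 = Fin.last (n+2)
        · rw [dif_pos hq, hq, Fin.snoc_last]
        · rw [dif_neg hq, snoc_apply_ne_last]
      calc c' ⟨j, hj⟩ v
          = ∑ x, f j (v ((i j).castPred hne)) *
              (g j (fun q : {p : Fin (n+3) // p ≠ i j} =>
                if hq : q.1 = Fin.last (n+2) then x else v ((q.1).castPred hq)) * h x) := by
            refine Finset.sum_congr rfl fun x _ => ?_
            rw [hfg, ← harg x]
            have hv : (Fin.snoc v x : Fin (n+3) → A) (i j) = v ((i j).castPred hne) :=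
              snoc_apply_ne_last v x (i j) hne
            rw [hv, mul_assoc]
        _ = f j (v ((i j).castPred hne)) *
              ∑ x, g j (fun q : {p : Fin (n+3) // p ≠ i j} =>
                if hq : q.1 = Fin.last (n+2) then x else v ((q.1).castPred hq)) * h x := by
            rw [← Finset.mul_sum]
        _ = _ := rfl
    have hsum' : ∀ v, T' v = ∑ j : {j : ι // j ∉ S}, c' j v := by
      intro v
      have hzero : ∀ j ∈ Finset.univ.filter (· ∈ S),
          (∑ x, c j (Fin.snoc v x) * h x) = 0 := by
        intro j hjf
        have hjS : j ∈ S := (Finset.mem_filter.mp hjf).2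
        have hij : i j = Fin.last (n+2) := (Finset.mem_filter.mp hjS).2
        have harg : ∀ x : A,
            (fun q : {p : Fin (n+3) // p ≠ i j} => (Fin.snoc v x : Fin (n+3) → A) q.1)
            = fun q => v ((q.1).castPred (fun hh => q.2 (hh.trans hij.symm))) := by
          intro x
          funext q
          exact snoc_apply_ne_last v x q.1 _
        calc (∑ x, c j (Fin.snoc v x) * h x)
            = ∑ x, g j (fun q : {p : Fin (n+3) // p ≠ i j} =>
                v ((q.1).castPred (fun hh => q.2 (hh.trans hij.symm)))) * (f j x * h x) := by
              refine Finset.sum_congr rfl fun x _ => ?_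
              rw [hfg, harg x]
              have hv : (Fin.snoc v x : Fin (n+3) → A) (i j) = x := by
                rw [hij, Fin.snoc_last]
              rw [hv]
              ring
          _ = g j (fun q : {p : Fin (n+3) // p ≠ i j} =>
                v ((q.1).castPred (fun hh => q.2 (hh.trans hij.symm)))) *
                ∑ x, f j x * h x := by rw [← Finset.mul_sum]
          _ = 0 := by rw [hker0 j hjS, mul_zero]
      calc T' v
          = ∑ x, (∑ j, c j (Fin.snoc v x)) * h x :=
            Finset.sum_congr rfl fun x _ => by rw [← hsum]
        _ = ∑ x, ∑ j, c j (Fin.snoc v x) * h x :=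
            Finset.sum_congr rfl fun x _ => Finset.sum_mul _ _ _
        _ = ∑ j : ι, ∑ x, c j (Fin.snoc v x) * h x := Finset.sum_comm
        _ = (∑ j ∈ Finset.univ.filter (· ∈ S), ∑ x, c j (Fin.snoc v x) * h x)
            + ∑ j ∈ Finset.univ.filter (· ∉ S), ∑ x, c j (Fin.snoc v x) * h x :=
            (Finset.sum_filter_add_sum_filter_not _ _ _).symm
        _ = ∑ j ∈ Finset.univ.filter (· ∉ S), ∑ x, c j (Fin.snoc v x) * h x := by
            rw [Finset.sum_eq_zero hzero, zero_add]
        _ = ∑ j : {j : ι // j ∉ S}, c' j v :=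
            Finset.sum_subtype _ (fun j => by simp) _
    have hfin := ih T' D' hdiag' hD'iff {j : ι // j ∉ S} (Subtype.fintype _) c' hslice' hsum'
    have hcards : S.card + Fintype.card {j : ι // j ∉ S} = Fintype.card ι := by
      rw [Fintype.card_subtype]
      have hfc := Finset.card_filter_add_card_filter_not
        (s := (Finset.univ : Finset ι)) (p := (· ∈ S))
      rw [Finset.filter_univ_mem] at hfc
      rw [← Finset.card_univ, ← hfc]
    calc D.card = Module.finrank F ↥(LinearMap.range L) + Module.finrank F ↥(LinearMap.ker L) := by
          rw [hrn, hUDrank]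
      _ ≤ S.card + D'.card := Nat.add_le_add hrange (by rw [hWrank]; exact hhrank)
      _ ≤ S.card + Fintype.card {j : ι // j ∉ S} := Nat.add_le_add_left hfin _
      _ = Fintype.card ι := hcards

end Lower

lemma upperBound {A F : Type*} [Fintype A] [Field F] (n : ℕ) (T : (Fin (n+2) → A) → F) :
    ∃ c : Fin (Fintype.card A) → ((Fin (n+2) → A) → F),
      (∀ j, IsSlice (c j)) ∧ ∀ v, T v = ∑ j, c j v := by
  classical
  set e : Fin (Fintype.card A) ≃ A := (Fintype.equivFin A).symm with hedef
  refine ⟨fun j v => (if v 0 = e j then (1:F) else 0) * T (fun p => if p = 0 then e j else v p),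
    fun j => ?_, fun v => ?_⟩
  · refine ⟨0, fun x => if x = e j then 1 else 0,
      fun w => T (fun p => if hp : p = 0 then e j else w ⟨p, hp⟩), fun v => ?_⟩
    have harg : (fun p : Fin (n+2) => if p = 0 then e j else v p)
        = (fun p : Fin (n+2) => if hp : p = 0 then e j else v p) := by
      funext p
      by_cases hp : p = 0
      · rw [if_pos hp, dif_pos hp]
      · rw [if_neg hp, dif_neg hp]
    show (if v 0 = e j then (1:F) else 0) * T (fun p => if p = 0 then e j else v p)
        = (if v 0 = e j then (1:F) else 0) * T (fun p => if hp : p = 0 then e j else v p)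
    rw [harg]
  · have hcomp : ∑ j : Fin (Fintype.card A),
        (if v 0 = e j then (1:F) else 0) * T (fun p => if p = 0 then e j else v p)
        = ∑ a : A, (if v 0 = a then (1:F) else 0) * T (fun p => if p = 0 then a else v p) :=
      Fintype.sum_equiv e _ _ (fun j => rfl)
    rw [hcomp]
    rw [Finset.sum_eq_single (v 0)]
    · rw [if_pos rfl, one_mul]
      congr 1
      funext p
      by_cases hp : p = 0
      · rw [if_pos hp, hp]
      · rw [if_neg hp]
    · intro a _ ha
      rw [if_neg (fun hh => ha hh.symm), zero_mul]
    · intro ha; exact absurd (Finset.mem_univ _) ha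


theorem stmt14 {A F : Type*} [Fintype A] [Field F] {k : ℕ} (hk : 2 ≤ k)
    (T : (Fin k → A) → F)
    (hT : ∀ v : Fin k → A, T v ≠ 0 ↔ ∀ i j : Fin k, v i = v j) :
    sliceRank T = Fintype.card A := by
  classical
  obtain ⟨n, rfl⟩ : ∃ n, k = n + 2 := ⟨k - 2, by omega⟩
  obtain ⟨c₀, hc₀s, hc₀⟩ := upperBound n T
  have hmem : Fintype.card A ∈ {r | ∃ c : Fin r → ((Fin (n+2) → A) → F),
      (∀ j, IsSlice (c j)) ∧ ∀ v, T v = ∑ j, c j v} := ⟨c₀, hc₀s, hc₀⟩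
  have hub : sliceRank T ≤ Fintype.card A := Nat.sInf_le hmem
  have hmem' := Nat.sInf_mem (⟨_, hmem⟩ : Set.Nonempty _)
  obtain ⟨c, hcs, hcsum⟩ := hmem'
  have hdiag : ∀ v : Fin (n+2) → A, (∃ i j, v i ≠ v j) → T v = 0 := by
    rintro v ⟨i, j, hij⟩
    by_contra h
    exact hij ((hT v).mp h i j)
  have hD : ∀ a : A, T (fun _ => a) ≠ 0 ↔ a ∈ (Finset.univ : Finset A) := by
    intro a
    simp only [Finset.mem_univ, iff_true]
    rw [hT]
    intro i j
    rfl
  have hlb := lowerAux n T Finset.univ hdiag hD (Fin (sliceRank T)) (Fin.fintype _) c hcs hcsum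
  rw [Finset.card_univ, Fintype.card_fin] at hlb
  exact le_antisymm hub hlb
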